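/- Let n ∈ ℕ with n ≥ 1, U > 0, and set the grid side length r := √d · n² · U. For any two points p, q ∈ ℝ^d, if the shift t is drawn uniformly at random from [0, r)^d, then the probability that p and q lie in different grid cells is at most ‖p - q‖₂ / (n² · U). -/

import Mathlib

open MeasureTheory

lemma oneD_le (r : ℝ) (hr : 0 < r) (a b : ℝ) (hab : a ≤ b) :
    volume {s : ℝ | s ∈ Set.Ico (0:ℝ) r ∧ ⌊(a - s) / r⌋ ≠ ⌊(b - s) / r⌋}
      ≤ ENNReal.ofReal (b - a) := by
  rcases le_or_gt r (b - a) with h | h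
  · calc volume {s : ℝ | s ∈ Set.Ico (0:ℝ) r ∧ ⌊(a - s) / r⌋ ≠ ⌊(b - s) / r⌋}
        ≤ volume (Set.Ico (0:ℝ) r) := measure_mono (fun s hs => hs.1)
      _ = ENNReal.ofReal r := by simp
      _ ≤ ENNReal.ofReal (b - a) := ENNReal.ofReal_le_ofReal h
  · set c : ℝ := r * Int.fract (a / r) with hc_def
    set e : ℝ := c + (b - a) with he_def
    have hc0 : 0 ≤ c := mul_nonneg hr.le (Int.fract_nonneg _)
    have hcr : c < r := by
      have := Int.fract_lt_one (a / r)
      nlinarith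
    have hca : a - c = ⌊a / r⌋ * r := by
      rw [hc_def, Int.fract]
      field_simp
      ring
    have her : e < 2 * r := by simp only [he_def]; linarith
    have he0 : 0 ≤ e := by simp only [he_def]; linarith
    have hsub : {s : ℝ | s ∈ Set.Ico (0:ℝ) r ∧ ⌊(a - s) / r⌋ ≠ ⌊(b - s) / r⌋}
        ⊆ Set.Ioc c (min e r) ∪ Set.Icc 0 (e - r) := by
      rintro s ⟨⟨hs0, hsr⟩, hne⟩
      have hmono : (a - s) / r ≤ (b - s) / r := by gcongr <;> linarith
      have hlt : ⌊(a - s) / r⌋ < ⌊(b - s) / r⌋ :=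
        lt_of_le_of_ne (Int.floor_le_floor hmono) hne
      set k : ℤ := ⌊(b - s) / r⌋ with hk_def
      have hk1 : (a - s) / r < (k : ℝ) := Int.floor_lt.mp hlt
      have hk2 : (k : ℝ) ≤ (b - s) / r := Int.floor_le _
      have hk1' : a - s < k * r := by
        have := (div_lt_iff₀ hr).mp hk1; linarith
      have hk2' : (k : ℝ) * r ≤ b - s := (le_div_iff₀ hr).mp hk2
      set k' : ℤ := k - ⌊a / r⌋ with hk'_def
      have hco : (k' : ℝ) * r = (k : ℝ) * r - (a - c) := by
        rw [hca]; push_cast [hk'_def]; ring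
      have hlb : c - s < (k' : ℝ) * r := by rw [hco]; linarith
      have hub : (k' : ℝ) * r ≤ e - s := by rw [hco, he_def]; linarith
      have hk'lb : (-1 : ℤ) < k' := by
        by_contra hcon
        push_neg at hcon
        have : (k' : ℝ) ≤ -1 := by exact_mod_cast hcon
        nlinarith
      have hk'ub : k' < 2 := by
        by_contra hcon
        push_neg at hcon
        have : (2 : ℝ) ≤ (k' : ℝ) := by exact_mod_cast hcon
        nlinarith
      have : k' = 0 ∨ k' = 1 := by omega
      rcases this with h0 | h1
      · left
        rw [h0] at hlb hub
        push_cast at hlb hub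
        exact ⟨by linarith, le_min (by linarith) hsr.le⟩
      · right
        rw [h1] at hub
        push_cast at hub
        exact ⟨hs0, by linarith⟩
    calc volume {s : ℝ | s ∈ Set.Ico (0:ℝ) r ∧ ⌊(a - s) / r⌋ ≠ ⌊(b - s) / r⌋}
        ≤ volume (Set.Ioc c (min e r) ∪ Set.Icc 0 (e - r)) := measure_mono hsub
      _ ≤ volume (Set.Ioc c (min e r)) + volume (Set.Icc 0 (e - r)) := measure_union_le _ _
      _ = ENNReal.ofReal (min e r - c) + ENNReal.ofReal (e - r - 0) := by
          rw [Real.volume_Ioc, Real.volume_Icc]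
      _ ≤ ENNReal.ofReal (b - a) := by
          rcases le_or_gt e r with he | he
          · rw [min_eq_left he]
            have h2 : ENNReal.ofReal (e - r - 0) = 0 := by
              rw [ENNReal.ofReal_eq_zero]; linarith
            rw [h2, add_zero]
            exact ENNReal.ofReal_le_ofReal (by simp only [he_def]; linarith)
          · rw [min_eq_right he.le, ← ENNReal.ofReal_add (by linarith) (by linarith)]
            exact ENNReal.ofReal_le_ofReal (by simp only [he_def]; linarith)

lemma oneD_abs (r : ℝ) (hr : 0 < r) (a b : ℝ) :
    volume {s : ℝ | s ∈ Set.Ico (0:ℝ) r ∧ ⌊(a - s) / r⌋ ≠ ⌊(b - s) / r⌋}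
      ≤ ENNReal.ofReal |a - b| := by
  rcases le_total a b with h | h
  · refine le_trans (oneD_le r hr a b h) ?_
    rw [abs_sub_comm, abs_of_nonneg (by linarith)]
  · have hswap : {s : ℝ | s ∈ Set.Ico (0:ℝ) r ∧ ⌊(a - s) / r⌋ ≠ ⌊(b - s) / r⌋}
        = {s : ℝ | s ∈ Set.Ico (0:ℝ) r ∧ ⌊(b - s) / r⌋ ≠ ⌊(a - s) / r⌋} := by
      ext s; simp [ne_comm]
    rw [hswap]
    refine le_trans (oneD_le r hr b a h) ?_
    rw [abs_of_nonneg (by linarith)]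

lemma l1_le_sqrt_card_mul_norm (d : ℕ) (x : EuclideanSpace ℝ (Fin d)) :
    ∑ i, |x i| ≤ Real.sqrt d * ‖x‖ := by
  have hnorm : ‖x‖ = Real.sqrt (∑ i, x i ^ 2) := by
    rw [EuclideanSpace.norm_eq]
    congr 1
    refine Finset.sum_congr rfl fun i _ => ?_
    rw [Real.norm_eq_abs, sq_abs]
  have h1 : (∑ i, |x i|) ^ 2 ≤ (d : ℝ) * ∑ i, x i ^ 2 := by
    have := sq_sum_le_card_mul_sum_sq (s := Finset.univ) (f := fun i : Fin d => |x i|)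
    simpa [sq_abs] using this
  calc ∑ i, |x i| = Real.sqrt ((∑ i, |x i|) ^ 2) := by
        rw [Real.sqrt_sq (Finset.sum_nonneg fun i _ => abs_nonneg _)]
    _ ≤ Real.sqrt ((d : ℝ) * ∑ i, x i ^ 2) := Real.sqrt_le_sqrt h1
    _ = Real.sqrt d * Real.sqrt (∑ i, x i ^ 2) := Real.sqrt_mul (Nat.cast_nonneg d) _
    _ = Real.sqrt d * ‖x‖ := by rw [hnorm]

/-- Lemma 5.2, quadtreeSep. For `n ≥ 1`, `U > 0` and grid side length
`r = √d · n² · U`, if the shift `t` is drawn uniformly at random from `[0, r)^d`, the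
probability that `p, q ∈ ℝ^d` lie in different grid cells is at most `‖p - q‖₂ / (n² · U)`. -/
theorem quadtree_separation (d n : ℕ) (hn : 1 ≤ n) (U : ℝ) (hU : 0 < U)
    (p q : EuclideanSpace ℝ (Fin d)) :
    ((ENNReal.ofReal ((Real.sqrt d * n ^ 2 * U) ^ d))⁻¹ •
        volume.restrict
          {t : EuclideanSpace ℝ (Fin d) | ∀ i, t i ∈ Set.Ico (0 : ℝ) (Real.sqrt d * n ^ 2 * U)})
      {t : EuclideanSpace ℝ (Fin d) |
        ∃ i, ⌊(p i - t i) / (Real.sqrt d * n ^ 2 * U)⌋ ≠ ⌊(q i - t i) / (Real.sqrt d * n ^ 2 * U)⌋}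
      ≤ ENNReal.ofReal (‖p - q‖ / (n ^ 2 * U)) := by
  rcases Nat.eq_zero_or_pos d with hd0 | hd
  · subst hd0
    have hempty : {t : EuclideanSpace ℝ (Fin 0) |
        ∃ i, ⌊(p i - t i) / (Real.sqrt 0 * n ^ 2 * U)⌋ ≠ ⌊(q i - t i) / (Real.sqrt 0 * n ^ 2 * U)⌋}
        = (∅ : Set (EuclideanSpace ℝ (Fin 0))) := by
      ext t
      simp
    rw [show ((0:ℕ):ℝ) = (0:ℝ) by norm_num] at *
    rw [hempty]
    simp
  · have hdpos : (0:ℝ) < d := by exact_mod_cast hd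
    have hsq : 0 < Real.sqrt d := Real.sqrt_pos.mpr hdpos
    have hn' : (0:ℝ) < (n:ℝ) := by exact_mod_cast hn
    set r : ℝ := Real.sqrt d * n ^ 2 * U with hrdef
    have hrpos : 0 < r := by positivity
    set S : Set (EuclideanSpace ℝ (Fin d)) := {t | ∀ i, t i ∈ Set.Ico (0 : ℝ) r} with hSdef
    have hSmeas : MeasurableSet S := by
      have : S = ⋂ i, (fun t : EuclideanSpace ℝ (Fin d) => t i) ⁻¹' Set.Ico (0:ℝ) r := by
        ext t; simp [hSdef]
      rw [this]
      exact MeasurableSet.iInter fun i => ((measurable_pi_apply i).comp (WithLp.measurable_ofLp 2 _)) measurableSet_Ico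
    set R : ENNReal := ENNReal.ofReal r with hRdef
    have hR0 : R ≠ 0 := by simp [hRdef, ENNReal.ofReal_eq_zero]; linarith
    have hRt : R ≠ ⊤ := ENNReal.ofReal_ne_top
    -- union bound
    rw [Set.setOf_exists]
    refine le_trans (measure_iUnion_le _) ?_
    have hbound : ∀ i : Fin d,
        ((ENNReal.ofReal (r ^ d))⁻¹ • volume.restrict S)
          {t : EuclideanSpace ℝ (Fin d) | ⌊(p i - t i) / r⌋ ≠ ⌊(q i - t i) / r⌋}
        ≤ ENNReal.ofReal |p i - q i| * R⁻¹ := by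
      intro i
      set B : Set ℝ := {s : ℝ | s ∈ Set.Ico (0:ℝ) r ∧ ⌊(p i - s) / r⌋ ≠ ⌊(q i - s) / r⌋} with hBdef
      set A : Fin d → Set ℝ := Function.update (fun _ : Fin d => Set.Ico (0:ℝ) r) i B with hAdef
      have hES : {t : EuclideanSpace ℝ (Fin d) | ⌊(p i - t i) / r⌋ ≠ ⌊(q i - t i) / r⌋} ∩ S
          = (MeasurableEquiv.toLp 2 (Fin d → ℝ)).symm ⁻¹' (Set.pi Set.univ A) := by
        ext t
        simp only [Set.mem_inter_iff, Set.mem_setOf_eq, Set.mem_preimage, Set.mem_pi,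
          Set.mem_univ, forall_true_left, hAdef, Function.update_apply,
          MeasurableEquiv.coe_toLp_symm, hSdef, hBdef]
        constructor
        · rintro ⟨h1, h2⟩ j
          by_cases hj : j = i
          · subst hj; simp only [if_pos rfl]; exact ⟨h2 j, h1⟩
          · simp only [if_neg hj]; exact h2 j
        · intro h
          have hi := h i
          simp only [if_pos rfl] at hi
          refine ⟨hi.2, fun j => ?_⟩
          by_cases hj : j = i
          · subst hj; exact hi.1
          · have := h j; simp only [if_neg hj] at this; exact this
      have hvol : volume ({t : EuclideanSpace ℝ (Fin d) | ⌊(p i - t i) / r⌋ ≠ ⌊(q i - t i) / r⌋} ∩ S)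
          = volume B * R ^ (d - 1) := by
        rw [hES,
          (EuclideanSpace.volume_preserving_symm_measurableEquiv_toLp (Fin d)).measure_preimage_equiv,
          volume_pi_pi]
        rw [← Finset.mul_prod_erase Finset.univ (fun j => volume (A j)) (Finset.mem_univ i)]
        have h1 : volume (A i) = volume B := by rw [hAdef, Function.update_self]
        have h2 : ∏ j ∈ Finset.univ.erase i, volume (A j) = R ^ (d - 1) := by
          rw [Finset.prod_congr rfl (fun j hj => ?_), Finset.prod_const,
            Finset.card_erase_of_mem (Finset.mem_univ i), Finset.card_univ, Fintype.card_fin]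
          rw [hAdef, Function.update_of_ne (Finset.ne_of_mem_erase hj), Real.volume_Ico,
            sub_zero, hRdef]
        rw [h1, h2]
      have happly : ((ENNReal.ofReal (r ^ d))⁻¹ • volume.restrict S)
          {t : EuclideanSpace ℝ (Fin d) | ⌊(p i - t i) / r⌋ ≠ ⌊(q i - t i) / r⌋}
          = (R ^ d)⁻¹ * (volume B * R ^ (d - 1)) := by
        rw [Measure.smul_apply, smul_eq_mul, Measure.restrict_apply' hSmeas, hvol,
          ENNReal.ofReal_pow hrpos.le, hRdef]
      rw [happly]
      have hpow : (R ^ d)⁻¹ * R ^ (d - 1) = R⁻¹ := by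
        have hRe : R ^ d = R ^ (d - 1) * R := by
          rw [← pow_succ]; congr 1; omega
        rw [hRe, ENNReal.mul_inv (Or.inl (pow_ne_zero _ hR0))
          (Or.inl (ENNReal.pow_ne_top hRt)), mul_comm ((R ^ (d-1))⁻¹) R⁻¹, mul_assoc,
          ENNReal.inv_mul_cancel (pow_ne_zero _ hR0) (ENNReal.pow_ne_top hRt), mul_one]
      calc (R ^ d)⁻¹ * (volume B * R ^ (d - 1))
          = volume B * ((R ^ d)⁻¹ * R ^ (d - 1)) := by ring
        _ = volume B * R⁻¹ := by rw [hpow]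
        _ ≤ ENNReal.ofReal |p i - q i| * R⁻¹ := by
            gcongr
            exact oneD_abs r hrpos (p i) (q i)
    calc ∑' i, ((ENNReal.ofReal (r ^ d))⁻¹ • volume.restrict S)
          {t : EuclideanSpace ℝ (Fin d) | ⌊(p i - t i) / r⌋ ≠ ⌊(q i - t i) / r⌋}
        ≤ ∑' i : Fin d, ENNReal.ofReal |p i - q i| * R⁻¹ := ENNReal.tsum_le_tsum hbound
      _ = (∑ i : Fin d, ENNReal.ofReal |p i - q i|) * R⁻¹ := by
          rw [tsum_fintype, Finset.sum_mul]
      _ = ENNReal.ofReal (∑ i : Fin d, |p i - q i|) * R⁻¹ := by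
          rw [ENNReal.ofReal_sum_of_nonneg fun i _ => abs_nonneg _]
      _ ≤ ENNReal.ofReal (Real.sqrt d * ‖p - q‖) * R⁻¹ := by
          gcongr
          have := l1_le_sqrt_card_mul_norm d (p - q)
          simpa [PiLp.sub_apply] using this
      _ = ENNReal.ofReal (Real.sqrt d * ‖p - q‖ / r) := by
          rw [ENNReal.ofReal_div_of_pos hrpos, div_eq_mul_inv, hRdef]
      _ ≤ ENNReal.ofReal (‖p - q‖ / (n ^ 2 * U)) := by
          apply ENNReal.ofReal_le_ofReal
          rw [hrdef]
          rw [show Real.sqrt d * ‖p - q‖ / (Real.sqrt d * n ^ 2 * U)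
              = ‖p - q‖ / (n ^ 2 * U) by field_simp]
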